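/- For any real numbers z, ζ and λ > 0, the identity holds: e^{izζ} − e^{−z²/2} = iz ∫_{−λ}^{λ} e^{izu} [𝒩(u) − 1_{ζ ≤ u}] du + √(2/π) ∫_{λ}^{∞} [cos(zλ) − cos(zu)] e^{−u²/2} du + (e^{izζ} − e^{−izλ}) 1_{ζ ≤ −λ} + (e^{izζ} − e^{izλ}) 1_{ζ > λ}, where 𝒩(u) = (1/√(2π)) ∫_{−∞}^{u} e^{−t²/2} dt. -/

import Mathlib

open Real MeasureTheory intervalIntegral

namespace Esseen15

noncomputable def G : ℝ → ℝ := fun t => Real.exp (-t ^ 2 / 2)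

lemma G_cont : Continuous G := by unfold G; fun_prop

lemma G_int : Integrable G := by
  have h := integrable_exp_neg_mul_sq (show (0:ℝ) < 1/2 by norm_num)
  have : G = fun x : ℝ => Real.exp (-(1/2) * x ^ 2) := by
    funext x; unfold G; congr 1; ring
  rw [this]; exact h

lemma G_total : ∫ t, G t = Real.sqrt (2 * π) := by
  have h := integral_gaussian (1/2)
  have : (∫ t, G t) = ∫ x : ℝ, Real.exp (-(1/2) * x ^ 2) := by
    congr 1; funext x; unfold G; congr 1; ring
  rw [this, h]; congr 1; rw [div_div_eq_mul_div, div_one]; ring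

lemma G_even (x : ℝ) : G (-x) = G x := by unfold G; rw [neg_pow]; norm_num

lemma G_pos (x : ℝ) : 0 < G x := Real.exp_pos _

lemma G_refl (lam : ℝ) : ∫ t in Set.Iic (-lam), G t = ∫ t in Set.Ioi lam, G t := by
  rw [← integral_comp_neg_Ioi]
  simp only [G_even]

lemma sqrt_two_div_pi : Real.sqrt (2 / π) = 2 * (Real.sqrt (2 * π))⁻¹ := by
  have h2π : (0:ℝ) < 2 * π := by positivity
  have hs : (0:ℝ) < Real.sqrt (2 * π) := Real.sqrt_pos.mpr h2π
  rw [eq_comm, mul_inv_eq_iff_eq_mul₀ hs.ne', ← Real.sqrt_mul (by positivity)]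
  have : 2 / π * (2 * π) = 2 ^ 2 := by field_simp
  rw [this, Real.sqrt_sq (by norm_num)]

noncomputable def Nr : ℝ → ℝ := fun x => (Real.sqrt (2 * π))⁻¹ * ∫ t in Set.Iic x, G t

lemma Nr_deriv (x : ℝ) : HasDerivAt Nr ((Real.sqrt (2 * π))⁻¹ * G x) x := by
  have h0 : ∀ y : ℝ, (∫ t in Set.Iic y, G t)
      = (∫ t in Set.Iic (0:ℝ), G t) + ∫ t in (0:ℝ)..y, G t := by
    intro y
    rw [← intervalIntegral.integral_Iic_sub_Iic G_int.integrableOn G_int.integrableOn]; ring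
  have h1 : HasDerivAt (fun y => ∫ t in (0:ℝ)..y, G t) (G x) x :=
    intervalIntegral.integral_hasDerivAt_right G_int.intervalIntegrable
      (G_cont.aestronglyMeasurable.stronglyMeasurableAtFilter) G_cont.continuousAt
  have h3 : HasDerivAt (fun y => ∫ t in Set.Iic y, G t) (G x) x := by
    have he : (fun y => ∫ t in Set.Iic y, G t)
        = fun y => (∫ t in Set.Iic (0:ℝ), G t) + ∫ t in (0:ℝ)..y, G t := funext h0
    rw [he]; exact h1.const_add _
  exact h3.const_mul _

lemma Nr_cont : Continuous Nr :=
  continuous_iff_continuousAt.mpr fun x => (Nr_deriv x).continuousAt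

noncomputable def E (z : ℝ) : ℝ → ℂ := fun u => Complex.exp (Complex.I * z * u)

lemma E_cont (z : ℝ) : Continuous (E z) := by
  unfold E
  exact Complex.continuous_exp.comp (continuous_const.mul Complex.continuous_ofReal)

lemma E_deriv (z : ℝ) (x : ℝ) : HasDerivAt (E z) (Complex.I * z * E z x) x := by
  have h1 : HasDerivAt (fun w : ℂ => Complex.exp (Complex.I * z * w))
      (Complex.exp (Complex.I * z * (x:ℂ)) * (Complex.I * z * 1)) (x : ℂ) :=
    (Complex.hasDerivAt_exp _).comp _ ((hasDerivAt_id _).const_mul _)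
  have h2 := h1.comp_ofReal
  have h3 : Complex.exp (Complex.I * z * (x:ℂ)) * (Complex.I * z * 1)
      = Complex.I * z * E z x := by unfold E; ring
  rw [h3] at h2
  exact h2

lemma E_norm (z : ℝ) (u : ℝ) : ‖E z u‖ = 1 := by
  unfold E
  rw [Complex.norm_exp]
  simp [Complex.mul_re]

lemma E_add_neg (z : ℝ) (u : ℝ) :
    E z u + E z (-u) = 2 * (Real.cos (z * u) : ℂ) := by
  unfold E
  have h1 : Complex.I * z * (u:ℝ) = ((z * u : ℝ) : ℂ) * Complex.I := by push_cast; ring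
  have h2 : Complex.I * z * ((-u : ℝ) : ℂ) = (-(z * u : ℝ) : ℂ) * Complex.I := by push_cast; ring
  rw [h1, h2, Complex.exp_mul_I, Complex.exp_mul_I, Complex.cos_neg, Complex.sin_neg,
    Complex.ofReal_cos]
  ring

lemma E_neg_lam (z lam : ℝ) : E z (-lam) = Complex.exp (-(Complex.I * z * lam)) := by
  unfold E; congr 1; push_cast; ring

lemma fourier (z : ℝ) :
    ∫ u : ℝ, E z u * (G u : ℂ)
      = (Real.sqrt (2 * π) : ℂ) * (Real.exp (-z ^ 2 / 2) : ℂ) := by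
  have h := fourierIntegral_gaussian (b := (1/2 : ℂ)) (by norm_num) (z : ℂ)
  have h1 : ∀ u : ℝ, E z u * (G u : ℂ)
      = Complex.exp (Complex.I * z * u) * Complex.exp (-(1/2 : ℂ) * u ^ 2) := by
    intro u
    unfold E G
    congr 1
    rw [Complex.ofReal_exp]
    congr 1
    push_cast
    ring
  simp only [h1]
  rw [h]
  have e1 : ((π : ℂ) / (1/2)) = ((2 * π : ℝ) : ℂ) := by push_cast; ring
  have e2 : ((2 * π : ℝ) : ℂ) ^ (1/2 : ℂ) = (Real.sqrt (2 * π) : ℂ) := by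
    rw [Real.sqrt_eq_rpow]
    rw [show (1/2 : ℂ) = ((1/2 : ℝ) : ℂ) by norm_num]
    rw [← Complex.ofReal_cpow (by positivity)]
  rw [e1, e2]
  congr 1
  rw [Complex.ofReal_exp]
  congr 1
  push_cast
  ring

lemma EG_int (z : ℝ) : Integrable (fun u => E z u * (G u : ℂ)) := by
  refine Integrable.mono' G_int
    (((E_cont z).mul (Complex.continuous_ofReal.comp G_cont)).aestronglyMeasurable)
    (ae_of_all _ fun u => ?_)
  rw [norm_mul, E_norm, one_mul, Complex.norm_real, Real.norm_eq_abs,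
    abs_of_pos (G_pos u)]

lemma EnegG_int (z : ℝ) : Integrable (fun u => E z (-u) * (G u : ℂ)) := by
  refine Integrable.mono' G_int
    ((((E_cont z).comp continuous_neg).mul
      (Complex.continuous_ofReal.comp G_cont)).aestronglyMeasurable)
    (ae_of_all _ fun u => ?_)
  rw [norm_mul, E_norm, one_mul, Complex.norm_real, Real.norm_eq_abs,
    abs_of_pos (G_pos u)]

lemma cosG_int (z : ℝ) : Integrable (fun u => Real.cos (z * u) * G u) := by
  refine Integrable.mono' G_int
    (((Real.continuous_cos.comp (continuous_const.mul continuous_id)).mul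
      G_cont).aestronglyMeasurable)
    (ae_of_all _ fun u => ?_)
  rw [Real.norm_eq_abs, abs_mul]
  calc |Real.cos (z * u)| * |G u| ≤ 1 * |G u| := by
        gcongr; exact Real.abs_cos_le_one _
    _ = G u := by rw [one_mul, abs_of_pos (G_pos u)]

theorem main (z ζ lam : ℝ) (hlam : 0 < lam) :
    E z ζ - (Real.exp (-z ^ 2 / 2) : ℂ) =
      Complex.I * (z : ℂ) *
        (∫ u in (-lam)..lam, E z u * (((Nr u : ℝ) : ℂ) - (if ζ ≤ u then (1 : ℂ) else 0)))
      + ((Real.sqrt (2 / π) *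
          ∫ u in Set.Ioi lam, (Real.cos (z * lam) - Real.cos (z * u)) * G u : ℝ) : ℂ)
      + (if ζ ≤ -lam then E z ζ - Complex.exp (-(Complex.I * (z : ℂ) * (lam : ℂ))) else 0)
      + (if lam < ζ then E z ζ - Complex.exp (Complex.I * (z : ℂ) * (lam : ℂ)) else 0) := by
  have hmm : -lam ≤ lam := by linarith
  -- FTC for E
  have hFTC : ∀ a b : ℝ, Complex.I * (z:ℂ) * ∫ u in a..b, E z u = E z b - E z a := by
    intro a b
    rw [← intervalIntegral.integral_const_mul]
    exact intervalIntegral.integral_eq_sub_of_hasDerivAt (fun x _ => E_deriv z x)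
      ((continuous_const.mul (E_cont z)).intervalIntegrable a b)
  -- indicator form
  have hind : (fun u => E z u * (if ζ ≤ u then (1:ℂ) else 0))
      = (Set.Ici ζ).indicator (E z) := by
    funext u
    by_cases h : ζ ≤ u <;> simp [Set.indicator, Set.mem_Ici, h]
  have hindint : ∀ a b : ℝ,
      IntervalIntegrable (fun u => E z u * (if ζ ≤ u then (1:ℂ) else 0)) volume a b := by
    intro a b
    rw [hind]
    exact ⟨((E_cont z).intervalIntegrable a b).1.indicator measurableSet_Ici,
      ((E_cont z).intervalIntegrable a b).2.indicator measurableSet_Ici⟩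
  -- Step A : the indicator integral
  have hA : Complex.I * (z:ℂ) * ∫ u in (-lam)..lam, E z u * (if ζ ≤ u then (1:ℂ) else 0)
      = E z lam - E z ζ
        + (if ζ ≤ -lam then E z ζ - E z (-lam) else 0)
        + (if lam < ζ then E z ζ - E z lam else 0) := by
    rcases le_or_gt ζ (-lam) with h1 | h1
    · have hcong : Set.EqOn (fun u => E z u * (if ζ ≤ u then (1:ℂ) else 0)) (E z)
          (Set.uIcc (-lam) lam) := by
        intro u hu
        rw [Set.uIcc_of_le hmm] at hu
        have : ζ ≤ u := le_trans h1 hu.1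
        simp [this]
      rw [intervalIntegral.integral_congr hcong, hFTC, if_pos h1, if_neg (by linarith)]
      ring
    · rcases le_or_gt ζ lam with h2 | h2
      · have hstep : ∫ u in (-lam)..lam, E z u * (if ζ ≤ u then (1:ℂ) else 0)
            = ∫ u in ζ..lam, E z u := by
          rw [hind, intervalIntegral.integral_of_le hmm, intervalIntegral.integral_of_le h2,
            MeasureTheory.integral_indicator measurableSet_Ici, Measure.restrict_restrict measurableSet_Ici]
          have hset : Set.Ici ζ ∩ Set.Ioc (-lam) lam = Set.Icc ζ lam := by
            ext x
            simp only [Set.mem_inter_iff, Set.mem_Ici, Set.mem_Ioc, Set.mem_Icc]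
            constructor
            · rintro ⟨ha, _, hc⟩; exact ⟨ha, hc⟩
            · rintro ⟨ha, hb⟩; exact ⟨ha, lt_of_lt_of_le h1 ha, hb⟩
          rw [hset, integral_Icc_eq_integral_Ioc]
        rw [hstep, hFTC, if_neg (not_le.mpr h1), if_neg (not_lt.mpr h2)]
        ring
      · have hcong : Set.EqOn (fun u => E z u * (if ζ ≤ u then (1:ℂ) else 0))
            (fun _ => (0:ℂ)) (Set.uIcc (-lam) lam) := by
          intro u hu
          rw [Set.uIcc_of_le hmm] at hu
          have : ¬ ζ ≤ u := by push_neg; exact lt_of_le_of_lt hu.2 h2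
          simp [this]
        rw [intervalIntegral.integral_congr hcong]
        rw [if_neg (by linarith), if_pos h2]
        simp
  -- abbreviations for the gaussian pieces
  set K : ℝ := ∫ t in Set.Ioi lam, G t with hK
  set Jr : ℝ := ∫ u in Set.Ioi lam, Real.cos (z * u) * G u with hJr
  set Jp : ℂ := ∫ x in Set.Ioi lam, E z x * (G x : ℂ) with hJp
  set Jm : ℂ := ∫ x in Set.Iic (-lam), E z x * (G x : ℂ) with hJm
  -- boundary values of Nr
  have hNlam : Nr lam = (Real.sqrt (2*π))⁻¹ * (Real.sqrt (2*π) - K) := by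
    unfold Nr
    congr 1
    have h := integral_Iic_add_Ioi (b := lam) G_int.integrableOn G_int.integrableOn
    rw [G_total] at h
    linarith
  have hNmlam : Nr (-lam) = (Real.sqrt (2*π))⁻¹ * K := by
    unfold Nr
    rw [G_refl]
  -- reflection for the complex tail
  have hJmrefl : Jm = ∫ x in Set.Ioi lam, E z (-x) * (G x : ℂ) := by
    rw [hJm, ← integral_comp_neg_Ioi lam (fun x => E z x * (G x : ℂ))]
    exact setIntegral_congr_fun measurableSet_Ioi (fun x _ => by rw [G_even])
  have hJsum : Jp + Jm = 2 * (Jr : ℂ) := by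
    rw [hJmrefl, hJp, ← integral_add (EG_int z).integrableOn (EnegG_int z).integrableOn]
    have : ∀ x : ℝ, E z x * (G x : ℂ) + E z (-x) * (G x : ℂ)
        = (2:ℂ) * ((Real.cos (z*x) * G x : ℝ) : ℂ) := by
      intro x
      rw [← add_mul, E_add_neg]
      push_cast
      ring
    simp only [this]
    rw [MeasureTheory.integral_const_mul,
      show (∫ a in Set.Ioi lam, ((Real.cos (z*a) * G a : ℝ):ℂ))
        = ((∫ u in Set.Ioi lam, Real.cos (z*u) * G u : ℝ) : ℂ) from _root_.integral_ofReal,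
      ← hJr]
  -- interval integral of E * G via the full Fourier transform
  have hmid : ∫ u in (-lam)..lam, E z u * (G u : ℂ)
      = (Real.sqrt (2*π) : ℂ) * (Real.exp (-z^2/2) : ℂ) - Jp - Jm := by
    rw [← intervalIntegral.integral_Iic_sub_Iic (EG_int z).integrableOn (EG_int z).integrableOn]
    have h := integral_Iic_add_Ioi (b := lam) (EG_int z).integrableOn (EG_int z).integrableOn
    rw [fourier z] at h
    rw [hJm]
    rw [show (∫ x in Set.Iic lam, E z x * (G x : ℂ))
        = (Real.sqrt (2*π) : ℂ) * (Real.exp (-z^2/2) : ℂ) - Jp by rw [hJp]; linear_combination h]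
  -- integration by parts
  have hIBP : ∫ u in (-lam)..lam, ((Nr u : ℝ):ℂ) * (Complex.I * (z:ℂ) * E z u)
      = ((Nr lam : ℝ):ℂ) * E z lam - ((Nr (-lam) : ℝ):ℂ) * E z (-lam)
        - ∫ u in (-lam)..lam, (((Real.sqrt (2*π))⁻¹ * G u : ℝ) : ℂ) * E z u := by
    exact intervalIntegral.integral_mul_deriv_eq_deriv_mul
      (fun x _ => (Nr_deriv x).ofReal_comp)
      (fun x _ => E_deriv z x)
      ((Complex.continuous_ofReal.comp ((continuous_const.mul G_cont))).intervalIntegrable _ _)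
      ((continuous_const.mul (E_cont z)).intervalIntegrable _ _)
  -- step B : the CDF integral
  have hB : Complex.I * (z:ℂ) * ∫ u in (-lam)..lam, E z u * ((Nr u : ℝ):ℂ)
      = E z lam - (Real.exp (-z^2/2) : ℂ)
        - ((Real.sqrt (2/π) *
            ∫ u in Set.Ioi lam, (Real.cos (z * lam) - Real.cos (z * u)) * G u : ℝ) : ℂ) := by
    have e1 : Complex.I * (z:ℂ) * ∫ u in (-lam)..lam, E z u * ((Nr u : ℝ):ℂ)
        = ∫ u in (-lam)..lam, ((Nr u : ℝ):ℂ) * (Complex.I * (z:ℂ) * E z u) := by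
      rw [← intervalIntegral.integral_const_mul]
      exact intervalIntegral.integral_congr (fun x _ => by ring)
    have e2 : ∫ u in (-lam)..lam, (((Real.sqrt (2*π))⁻¹ * G u : ℝ) : ℂ) * E z u
        = ((Real.sqrt (2*π))⁻¹ : ℂ) * ∫ u in (-lam)..lam, E z u * (G u : ℂ) := by
      rw [← intervalIntegral.integral_const_mul]
      exact intervalIntegral.integral_congr (fun x _ => by push_cast; ring)
    have hRr : (Real.sqrt (2/π) *
        ∫ u in Set.Ioi lam, (Real.cos (z * lam) - Real.cos (z * u)) * G u : ℝ)
        = 2 * (Real.sqrt (2*π))⁻¹ * (Real.cos (z * lam) * K - Jr) := by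
      rw [sqrt_two_div_pi]
      have hsplit : ∫ u in Set.Ioi lam, (Real.cos (z * lam) - Real.cos (z * u)) * G u
          = Real.cos (z * lam) * K - Jr := by
        have : ∀ u : ℝ, (Real.cos (z * lam) - Real.cos (z * u)) * G u
            = Real.cos (z * lam) * G u - Real.cos (z * u) * G u := fun u => by ring
        simp only [this]
        rw [integral_sub (G_int.integrableOn.const_mul _) (cosG_int z).integrableOn,
          MeasureTheory.integral_const_mul, ← hK, ← hJr]
      rw [hsplit]
    have hs1 : (((Real.sqrt (2*π) : ℝ) : ℂ))⁻¹ * ((Real.sqrt (2*π) : ℝ) : ℂ) = 1 :=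
      inv_mul_cancel₀ (Complex.ofReal_ne_zero.mpr (Real.sqrt_pos.mpr (by positivity)).ne')
    have hEE : E z lam + E z (-lam) = 2 * ((Real.cos (z * lam) : ℝ) : ℂ) := E_add_neg z lam
    rw [e1, hIBP, e2, hmid, hNlam, hNmlam, hRr]
    simp only [Complex.ofReal_mul, Complex.ofReal_sub, Complex.ofReal_inv,
      Complex.ofReal_ofNat]
    linear_combination (E z lam - ((Real.exp (-z^2/2) : ℝ) : ℂ)) * hs1
      + (((Real.sqrt (2*π) : ℝ) : ℂ))⁻¹ * hJsum
      - (((Real.sqrt (2*π) : ℝ) : ℂ))⁻¹ * ((K:ℝ):ℂ) * hEE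
  -- split the main integral
  have hNint : IntervalIntegrable (fun u => E z u * ((Nr u : ℝ):ℂ)) volume (-lam) lam :=
    ((E_cont z).mul (Complex.continuous_ofReal.comp Nr_cont)).intervalIntegrable _ _
  have hsplit : ∫ u in (-lam)..lam, E z u * (((Nr u : ℝ) : ℂ) - (if ζ ≤ u then (1:ℂ) else 0))
      = (∫ u in (-lam)..lam, E z u * ((Nr u : ℝ):ℂ))
        - ∫ u in (-lam)..lam, E z u * (if ζ ≤ u then (1:ℂ) else 0) := by
    rw [← intervalIntegral.integral_sub hNint (hindint _ _)]
    exact intervalIntegral.integral_congr (fun x _ => by ring)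
  rw [hsplit, mul_sub, hB, hA, E_neg_lam]
  simp only [E]
  ring

end Esseen15

/-- Esseen-type identity: for real `z, ζ` and `λ > 0`,
`e^{izζ} - e^{-z²/2} = iz ∫_{-λ}^{λ} e^{izu}[𝒩(u) - 1_{ζ≤u}] du
 + √(2/π) ∫_{λ}^{∞} [cos(zλ) - cos(zu)] e^{-u²/2} du
 + (e^{izζ} - e^{-izλ}) 1_{ζ≤-λ} + (e^{izζ} - e^{izλ}) 1_{ζ>λ}`,
where `𝒩` is the standard normal CDF. -/
theorem stmt_15 (z ζ lam : ℝ) (hlam : 0 < lam) :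
    Complex.exp (Complex.I * (z : ℂ) * (ζ : ℂ)) - (Real.exp (-z ^ 2 / 2) : ℂ) =
      Complex.I * (z : ℂ) *
        (∫ u in (-lam)..lam, Complex.exp (Complex.I * (z : ℂ) * (u : ℂ)) *
          ((((Real.sqrt (2 * π))⁻¹ * ∫ t in Set.Iic u, Real.exp (-t ^ 2 / 2) : ℝ) : ℂ) -
            (if ζ ≤ u then (1 : ℂ) else 0)))
      + ((Real.sqrt (2 / π) *
          ∫ u in Set.Ioi lam, (Real.cos (z * lam) - Real.cos (z * u)) *
            Real.exp (-u ^ 2 / 2) : ℝ) : ℂ)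
      + (if ζ ≤ -lam then
          Complex.exp (Complex.I * (z : ℂ) * (ζ : ℂ)) -
            Complex.exp (-(Complex.I * (z : ℂ) * (lam : ℂ))) else 0)
      + (if lam < ζ then
          Complex.exp (Complex.I * (z : ℂ) * (ζ : ℂ)) -
            Complex.exp (Complex.I * (z : ℂ) * (lam : ℂ)) else 0) := by
  exact Esseen15.main z ζ lam hlam
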